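/- For any infinite cardinal κ, every element α ∈ IPF(σℕ^κ) has a unique representation α = ρ_α ∘ F°_g ∘ λ_α for some bijection g of κ, where ρ_α : ↑d_α → σℕ^κ is z ↦ z - d_α + 𝟏, λ_α : σℕ^κ → ↑r_α is z ↦ z + r_α - 𝟏, and F°_g is the order automorphism a ↦ a ∘ g⁻¹ of σℕ^κ. -/

import Mathlib

open scoped Classical

/-- `σℕ^κ`: functions `κ → ℕ` with all values `≥ 1` and only finitely many values `≠ 1`. -/
def sigmaN (κ : Type*) : Set (κ → ℕ) :=
  {a | (∀ x, 1 ≤ a x) ∧ {x | a x ≠ 1}.Finite}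

/-- The poset `σℕ^κ` (with the pointwise order, inherited from `κ → ℕ`). -/
abbrev SN (κ : Type*) := ↥(sigmaN κ)

/-- A partial map `α` on `σℕ^κ` belongs to `IPF(σℕ^κ)` iff it is an order isomorphism
from a principal filter `↑a` onto a principal filter `↑b`. Multiplication in
`IPF(σℕ^κ)` is left-to-right composition of partial maps: `α` followed by `β`
is `β.comp α` (`PFun` composition). -/
def IsIPF {κ : Type*} (α : SN κ →. SN κ) : Prop :=
  ∃ a b : SN κ, α.Dom = {z | a ≤ z} ∧ α.ran = {z | b ≤ z} ∧
    ∀ (z w : SN κ) (hz : z ∈ α.Dom) (hw : w ∈ α.Dom),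
      z ≤ w ↔ α.fn z hz ≤ α.fn w hw

/-- `z - a + 𝟏` (pointwise) as an element of `σℕ^κ`. -/
noncomputable def subAddOne {κ : Type*} (z a : SN κ) : SN κ :=
  ⟨fun x => z.1 x - a.1 x + 1, by
    refine ⟨fun x => Nat.le_add_left 1 _,
      Set.Finite.subset (z.2.2.union a.2.2) fun x hx => ?_⟩
    simp only [Set.mem_setOf_eq] at hx
    by_contra h
    simp only [Set.mem_union, Set.mem_setOf_eq, not_or, not_not] at h
    exact hx (by simp [h.1, h.2])⟩

/-- `z + b - 𝟏` (pointwise) as an element of `σℕ^κ`. -/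
noncomputable def addSubOne {κ : Type*} (z b : SN κ) : SN κ :=
  ⟨fun x => z.1 x + b.1 x - 1, by
    refine ⟨fun x => ?_, Set.Finite.subset (z.2.2.union b.2.2) fun x hx => ?_⟩
    · have h1 := z.2.1 x
      have h2 := b.2.1 x
      dsimp only
      omega
    · simp only [Set.mem_setOf_eq] at hx
      by_contra h
      simp only [Set.mem_union, Set.mem_setOf_eq, not_or, not_not] at h
      exact hx (by simp [h.1, h.2])⟩

/-- `ρ_a : ↑a → σℕ^κ`, `z ↦ z - a + 𝟏`, as a partial map. -/
noncomputable def rhoP {κ : Type*} (a : SN κ) : SN κ →. SN κ :=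
  fun z => ⟨a ≤ z, fun _ => subAddOne z a⟩

/-- `λ_b : σℕ^κ → ↑b`, `z ↦ z + b - 𝟏`, as a (total) partial map. -/
noncomputable def lamP {κ : Type*} (b : SN κ) : SN κ →. SN κ :=
  fun z => Part.some (addSubOne z b)

/-- `F°_g : σℕ^κ → σℕ^κ`, `a ↦ a ∘ g⁻¹`. -/
noncomputable def FgSN {κ : Type*} (g : Equiv.Perm κ) (a : SN κ) : SN κ :=
  ⟨fun x => a.1 (g.symm x), by
    refine ⟨fun x => a.2.1 _, Set.Finite.subset (a.2.2.image g) fun x hx => ?_⟩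
    exact ⟨g.symm x, hx, by simp⟩⟩

/-- `F°_g` as a (total) partial map on `σℕ^κ`. -/
noncomputable def FgP {κ : Type*} (g : Equiv.Perm κ) : SN κ →. SN κ :=
  fun z => Part.some (FgSN g z)

section Aux
variable {κ : Type*}

lemma SN.le_def {u v : SN κ} : u ≤ v ↔ ∀ x, u.1 x ≤ v.1 x :=
  Subtype.coe_le_coe.symm.trans Pi.le_def

noncomputable def oneSN : SN κ :=
  ⟨fun _ => 1, ⟨fun _ => le_refl 1, Set.Finite.subset (Set.finite_empty) (by simp)⟩⟩

noncomputable def eSN (x : κ) (n : ℕ) : SN κ :=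
  ⟨fun y => if y = x then n + 1 else 1,
    ⟨fun y => by dsimp only; split <;> omega,
     Set.Finite.subset (Set.finite_singleton x) (fun y hy => by
       simp only [Set.mem_setOf_eq] at hy
       simp only [Set.mem_singleton_iff]
       by_contra h
       exact hy (if_neg h))⟩⟩

lemma eSN_self (x : κ) (n : ℕ) : (eSN x n).1 x = n + 1 := if_pos rfl

lemma eSN_ne {x y : κ} (n : ℕ) (h : y ≠ x) : (eSN x n).1 y = 1 := if_neg h

lemma eSN_le {x : κ} {n : ℕ} {u : SN κ} : eSN x n ≤ u ↔ n + 1 ≤ u.1 x := by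
  rw [SN.le_def]
  constructor
  · intro h
    have := h x
    rwa [eSN_self] at this
  · intro h y
    by_cases hy : y = x
    · subst hy; rw [eSN_self]; exact h
    · rw [eSN_ne _ hy]; exact u.2.1 y

lemma oneSN_le (u : SN κ) : oneSN ≤ u := SN.le_def.mpr fun x => u.2.1 x

def IsC (u : SN κ) : Prop := ∀ v w : SN κ, v ≤ u → w ≤ u → v ≤ w ∨ w ≤ v

lemma isC_eSN (x : κ) (n : ℕ) : IsC (eSN x n) := by
  intro v w hv hw
  have hv1 : ∀ y, y ≠ x → v.1 y = 1 := fun y hy =>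
    le_antisymm (by have := SN.le_def.mp hv y; rwa [eSN_ne _ hy] at this) (v.2.1 y)
  have hw1 : ∀ y, y ≠ x → w.1 y = 1 := fun y hy =>
    le_antisymm (by have := SN.le_def.mp hw y; rwa [eSN_ne _ hy] at this) (w.2.1 y)
  rcases le_total (v.1 x) (w.1 x) with h | h
  · left; rw [SN.le_def]; intro y
    by_cases hy : y = x
    · subst hy; exact h
    · rw [hv1 y hy]; exact w.2.1 y
  · right; rw [SN.le_def]; intro y
    by_cases hy : y = x
    · subst hy; exact h
    · rw [hw1 y hy]; exact v.2.1 y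

lemma isC_struct {u : SN κ} (hC : IsC u) (hne : u ≠ oneSN) : ∃ x n, u = eSN x (n + 1) := by
  have hx : ∃ x, 2 ≤ u.1 x := by
    by_contra h
    push_neg at h
    apply hne
    apply Subtype.ext
    funext y
    have h1 := u.2.1 y
    have h2 := h y
    show u.1 y = 1
    omega
  obtain ⟨x, hx⟩ := hx
  have hother : ∀ y, y ≠ x → u.1 y = 1 := by
    intro y hy
    by_contra h
    have h2 : 2 ≤ u.1 y := by have := u.2.1 y; omega
    have h1 : eSN x 1 ≤ u := eSN_le.mpr hx
    have h1' : eSN y 1 ≤ u := eSN_le.mpr h2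
    rcases hC _ _ h1 h1' with hle | hle
    · have := SN.le_def.mp hle x
      rw [eSN_self, eSN_ne _ (fun hh => hy hh.symm)] at this
      omega
    · have := SN.le_def.mp hle y
      rw [eSN_self, eSN_ne _ hy] at this
      omega
  refine ⟨x, u.1 x - 2, ?_⟩
  apply Subtype.ext
  funext y
  by_cases hy : y = x
  · subst hy
    show u.1 y = (eSN y (u.1 y - 2 + 1)).1 y
    rw [eSN_self]
    omega
  · show u.1 y = (eSN x (u.1 x - 2 + 1)).1 y
    rw [eSN_ne _ hy]
    exact hother y hy



lemma iso_one (φ : SN κ ≃o SN κ) : φ oneSN = oneSN := by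
  apply le_antisymm
  · have h := oneSN_le (φ.symm oneSN)
    have h2 := φ.monotone h
    rwa [φ.apply_symm_apply] at h2
  · exact oneSN_le _

lemma iso_isC (φ : SN κ ≃o SN κ) {u : SN κ} (h : IsC u) : IsC (φ u) := by
  intro v w hv hw
  have hv' : φ.symm v ≤ u := by
    have := φ.symm.monotone hv
    rwa [φ.symm_apply_apply] at this
  have hw' : φ.symm w ≤ u := by
    have := φ.symm.monotone hw
    rwa [φ.symm_apply_apply] at this
  rcases h _ _ hv' hw' with h' | h'
  · left
    have := φ.monotone h'
    rwa [φ.apply_symm_apply, φ.apply_symm_apply] at this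
  · right
    have := φ.monotone h'
    rwa [φ.apply_symm_apply, φ.apply_symm_apply] at this

lemma eSN_ne_one (x : κ) (n : ℕ) : eSN x (n + 1) ≠ oneSN := by
  intro h
  have := congrArg (fun u => u.1 x) h
  simp only [eSN_self] at this
  have : n + 2 = 1 := this
  omega

/-- images of the chain over `x` under an order iso all live over one coordinate,
with matching heights. -/
lemma chainMap (φ : SN κ ≃o SN κ) (x : κ) : ∃ y, ∀ n, φ (eSN x (n + 1)) = eSN y (n + 1) := by
  have hform : ∀ (ψ : SN κ ≃o SN κ) (z : κ) (n : ℕ), ∃ y m, ψ (eSN z (n + 1)) = eSN y (m + 1) := by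
    intro ψ z n
    refine isC_struct (iso_isC ψ (isC_eSN z (n + 1))) ?_
    intro h
    exact eSN_ne_one z n (ψ.injective (h.trans (iso_one ψ).symm))
  -- the coordinate of the image chain
  have hcoordgen : ∀ (ψ : SN κ ≃o SN κ) (z y : κ) (m0 : ℕ),
      ψ (eSN z 1) = eSN y (m0 + 1) → ∀ n, ∃ m, ψ (eSN z (n + 1)) = eSN y (m + 1) := by
    intro ψ z y m0 hy n
    obtain ⟨y', m', h'⟩ := hform ψ z n
    have hle : eSN y (m0 + 1) ≤ eSN y' (m' + 1) := by
      rw [← hy, ← h']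
      exact ψ.monotone (eSN_le.mpr (by rw [eSN_self]; omega))
    have hv := SN.le_def.mp hle y
    rw [eSN_self] at hv
    by_cases hyy : y = y'
    · subst hyy; exact ⟨m', h'⟩
    · rw [eSN_ne _ (hyy)] at hv; omega
  obtain ⟨y, m0, hy0⟩ := hform φ x 0
  have hcoord := hcoordgen φ x y m0 hy0
  choose F hF using hcoord
  -- the reverse map lands over x
  obtain ⟨x0, n0, hx0'⟩ := hform φ.symm y 0
  have hx0 : x0 = x := by
    have hsymm_eq : φ.symm (eSN y (F 0 + 1)) = eSN x 1 := by
      rw [← hF 0, φ.symm_apply_apply]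
    have hle : eSN x0 (n0 + 1) ≤ eSN x 1 := by
      rw [← hx0', ← hsymm_eq]
      exact φ.symm.monotone (eSN_le.mpr (by rw [eSN_self]; omega))
    have hv := SN.le_def.mp hle x0
    rw [eSN_self] at hv
    by_contra hxx
    rw [eSN_ne _ hxx] at hv
    omega
  subst hx0
  have hcoord' := hcoordgen φ.symm y x0 n0 hx0'
  choose G hG using hcoord'
  -- G ∘ F = id
  have hGF : ∀ n, G (F n) = n := by
    intro n
    have h1 : φ.symm (eSN y (F n + 1)) = eSN x0 (n + 1) := by
      rw [← hF n, φ.symm_apply_apply]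
    have h2 := hG (F n)
    rw [h1] at h2
    have := congrArg (fun u => u.1 x0) h2
    simp only [eSN_self] at this
    omega
  have hFmono : StrictMono F := by
    intro m n hmn
    have h1 : eSN y (F m + 1) ≤ eSN y (F n + 1) := by
      rw [← hF m, ← hF n]
      exact φ.monotone (eSN_le.mpr (by rw [eSN_self]; omega))
    have h2 := SN.le_def.mp h1 y
    rw [eSN_self, eSN_self] at h2
    have hne2 : F m ≠ F n := by
      intro h
      have : eSN x0 (m + 1) = eSN x0 (n + 1) := φ.injective (by rw [hF m, hF n, h])
      have := congrArg (fun u => u.1 x0) this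
      simp only [eSN_self] at this
      omega
    omega
  have hGmono : StrictMono G := by
    intro m n hmn
    have h1 : eSN x0 (G m + 1) ≤ eSN x0 (G n + 1) := by
      rw [← hG m, ← hG n]
      exact φ.symm.monotone (eSN_le.mpr (by rw [eSN_self]; omega))
    have h2 := SN.le_def.mp h1 x0
    rw [eSN_self, eSN_self] at h2
    have hne2 : G m ≠ G n := by
      intro h
      have : eSN y (m + 1) = eSN y (n + 1) := φ.symm.injective (by rw [hG m, hG n, h])
      have := congrArg (fun u => u.1 y) this
      simp only [eSN_self] at this
      omega
    omega
  have hFid : ∀ n, F n = n := by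
    intro n
    have h1 : n ≤ F n := hFmono.le_apply
    have h2 : F n ≤ G (F n) := hGmono.le_apply
    rw [hGF n] at h2
    omega
  exact ⟨y, fun n => by rw [hF n, hFid n]⟩

/-- Every order automorphism of `σℕ^κ` is a coordinate permutation. -/
lemma key_iso (φ : SN κ ≃o SN κ) : ∃ g : Equiv.Perm κ, ∀ u, φ u = FgSN g u := by
  choose gm hgm using fun x => chainMap φ x
  have hinj : Function.Injective gm := by
    intro x x' h
    have h2 : eSN x 1 = eSN x' 1 := φ.injective (by rw [hgm x 0, hgm x' 0, h])
    by_contra hne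
    have := congrArg (fun u => u.1 x) h2
    rw [show (eSN x 1).1 x = 2 from eSN_self x 1,
      show (eSN x' 1).1 x = 1 from eSN_ne 1 hne] at this
    omega
  have hsurj : Function.Surjective gm := by
    intro y
    obtain ⟨x, hx⟩ := chainMap φ.symm y
    refine ⟨x, ?_⟩
    have h1 : φ (eSN x 1) = eSN (gm x) 1 := hgm x 0
    have h3 : φ (eSN x 1) = eSN y 1 := by rw [← hx 0, φ.apply_symm_apply]
    have h4 : eSN (gm x) 1 = eSN y 1 := h1.symm.trans h3
    by_contra hne
    have := congrArg (fun u => u.1 (gm x)) h4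
    rw [show (eSN (gm x) 1).1 (gm x) = 2 from eSN_self _ 1,
      show (eSN y 1).1 (gm x) = 1 from eSN_ne 1 hne] at this
    omega
  refine ⟨Equiv.ofBijective gm ⟨hinj, hsurj⟩, ?_⟩
  set g := Equiv.ofBijective gm ⟨hinj, hsurj⟩ with hgdef
  intro u
  apply Subtype.ext
  funext yy
  show (φ u).1 yy = u.1 (g.symm yy)
  set x := g.symm yy with hxdef
  have hgx : gm x = yy := g.apply_symm_apply yy
  have he : ∀ n : ℕ, φ (eSN x (n + 1)) = eSN yy (n + 1) := by
    intro n
    rw [hgm x n, hgx]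
  have hiff : ∀ n : ℕ, n + 2 ≤ (φ u).1 yy ↔ n + 2 ≤ u.1 x := by
    intro n
    constructor
    · intro h
      have h1 : eSN yy (n + 1) ≤ φ u := eSN_le.mpr (by omega)
      rw [← he n] at h1
      have h2 : eSN x (n + 1) ≤ u := φ.le_iff_le.mp h1
      have := eSN_le.mp h2
      omega
    · intro h
      have h2 : eSN x (n + 1) ≤ u := eSN_le.mpr (by omega)
      have h1 : φ (eSN x (n + 1)) ≤ φ u := φ.monotone h2
      rw [he n] at h1
      have := eSN_le.mp h1
      omega
  have h1 : 1 ≤ (φ u).1 yy := (φ u).2.1 yy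
  have h2 : 1 ≤ u.1 x := u.2.1 x
  rcases Nat.lt_or_ge ((φ u).1 yy) 2 with hl | hl
  · rcases Nat.lt_or_ge (u.1 x) 2 with hl' | hl'
    · omega
    · have := (hiff (u.1 x - 2)).mpr (by omega); omega
  · have ha1 := (hiff ((φ u).1 yy - 2)).mp (by omega)
    rcases Nat.lt_or_ge (u.1 x) 2 with hl' | hl'
    · omega
    · have := (hiff (u.1 x - 2)).mpr (by omega); omega

end Aux

section Aux2
variable {κ : Type*}


lemma addSubOne_apply (z b : SN κ) (x : κ) : (addSubOne z b).1 x = z.1 x + b.1 x - 1 := rfl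

lemma subAddOne_apply (z a : SN κ) (x : κ) : (subAddOne z a).1 x = z.1 x - a.1 x + 1 := rfl

lemma SNsub_add (z a : SN κ) (h : a ≤ z) : addSubOne (subAddOne z a) a = z := by
  apply Subtype.ext; funext x
  have h1 := a.2.1 x
  have h2 := SN.le_def.mp h x
  rw [addSubOne_apply, subAddOne_apply]
  omega

lemma SNadd_sub (u a : SN κ) : subAddOne (addSubOne u a) a = u := by
  apply Subtype.ext; funext x
  have h1 := a.2.1 x
  have h2 := u.2.1 x
  rw [subAddOne_apply, addSubOne_apply]
  omega

lemma le_addSubOne (u a : SN κ) : a ≤ addSubOne u a :=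
  SN.le_def.mpr fun x => by
    have := u.2.1 x
    rw [addSubOne_apply]
    omega

lemma addSubOne_le_iff {u v a : SN κ} : addSubOne u a ≤ addSubOne v a ↔ u ≤ v := by
  rw [SN.le_def, SN.le_def]
  constructor <;> intro h x <;> have h0 := h x <;>
    have h1 := u.2.1 x <;> have h2 := v.2.1 x <;> have h3 := a.2.1 x <;>
    rw [addSubOne_apply, addSubOne_apply] at * <;> omega

lemma subAddOne_le_iff {z w a : SN κ} (hz : a ≤ z) (hw : a ≤ w) :
    subAddOne z a ≤ subAddOne w a ↔ z ≤ w := by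
  rw [SN.le_def, SN.le_def]
  constructor <;> intro h x <;> have h0 := h x <;>
    have h1 := SN.le_def.mp hz x <;> have h2 := SN.le_def.mp hw x <;>
    rw [subAddOne_apply, subAddOne_apply] at * <;> omega

lemma addSubOne_inj {u v b : SN κ} (h : addSubOne u b = addSubOne v b) : u = v := by
  have := congrArg (fun t => subAddOne t b) h
  simpa only [SNadd_sub] using this

lemma comp_mem_iff (a b : SN κ) (g : Equiv.Perm κ) (z w : SN κ) :
    w ∈ ((lamP b).comp ((FgP g).comp (rhoP a))) z ↔
      ∃ _ : a ≤ z, w = addSubOne (FgSN g (subAddOne z a)) b := by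
  show w ∈ ((⟨a ≤ z, fun _ => subAddOne z a⟩ : Part (SN κ)).bind
    (fun u => Part.some (FgSN g u))).bind (fun u => Part.some (addSubOne u b)) ↔ _
  simp only [PFun.comp_apply, rhoP, lamP, FgP, Part.mem_bind_iff, Part.mem_mk_iff,
    Part.mem_some_iff]
  constructor
  · rintro ⟨c, ⟨c', ⟨hz, rfl⟩, rfl⟩, rfl⟩
    exact ⟨hz, rfl⟩
  · rintro ⟨hz, rfl⟩
    exact ⟨FgSN g (subAddOne z a), ⟨subAddOne z a, ⟨hz, rfl⟩, rfl⟩, rfl⟩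

end Aux2

lemma fnCongr {γ δ : Type*} (f : γ →. δ) {z z' : γ} (h : z = z')
    {hz : z ∈ f.Dom} {hz' : z' ∈ f.Dom} : f.fn z hz = f.fn z' hz' := by
  subst h; rfl

/-- Every `α ∈ IPF(σℕ^κ)`, with `dom α = ↑a` and `ran α = ↑b`, is uniquely
represented as `ρ_α F°_g λ_α` (left-to-right composition: `ρ` first, then `F°_g`,
then `λ`). -/
theorem stmt16 {κ : Type*} [Infinite κ] (α : SN κ →. SN κ) (hα : IsIPF α)
    (a b : SN κ) (ha : α.Dom = {z | a ≤ z}) (hb : α.ran = {z | b ≤ z}) :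
    ∃! g : Equiv.Perm κ, α = (lamP b).comp ((FgP g).comp (rhoP a)) := by
  obtain ⟨a', b', -, -, hmono⟩ := hα
  have hdom : ∀ z : SN κ, a ≤ z → z ∈ α.Dom := fun z hz => by rw [ha]; exact hz
  have hranb : ∀ (z : SN κ) (hz : z ∈ α.Dom), b ≤ α.fn z hz := by
    intro z hz
    have hmem : α.fn z hz ∈ α.ran := ⟨z, Part.get_mem hz⟩
    rw [hb] at hmem
    exact hmem
  have hsurja : ∀ w : SN κ, b ≤ w → ∃ z, ∃ hz : z ∈ α.Dom, α.fn z hz = w := by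
    intro w hw
    have hmem : w ∈ α.ran := by rw [hb]; exact hw
    obtain ⟨z, hz⟩ := hmem
    have hd : (α z).Dom := Part.dom_iff_mem.mpr ⟨w, hz⟩
    exact ⟨z, hd, Part.get_eq_of_mem hz hd⟩
  obtain ⟨φf, hφfdef⟩ : ∃ f : SN κ → SN κ,
      ∀ u, f u = subAddOne (α.fn (addSubOne u a) (hdom _ (le_addSubOne u a))) b :=
    ⟨_, fun u => rfl⟩
  have hφval : ∀ (z) (hz : z ∈ α.Dom), φf (subAddOne z a) = subAddOne (α.fn z hz) b := by
    intro z hz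
    have haz : a ≤ z := by rw [ha] at hz; exact hz
    have hzz : addSubOne (subAddOne z a) a = z := SNsub_add z a haz
    rw [hφfdef]
    exact congrArg (fun t => subAddOne t b) (fnCongr α hzz)
  have hφiff : ∀ u v, φf u ≤ φf v ↔ u ≤ v := by
    intro u v
    rw [hφfdef, hφfdef, subAddOne_le_iff (hranb _ _) (hranb _ _)]
    exact ((hmono _ _ _ _).symm).trans addSubOne_le_iff
  have hinj : Function.Injective φf := fun u v h =>
    le_antisymm ((hφiff u v).mp h.le) ((hφiff v u).mp h.ge)
  have hsurjf : Function.Surjective φf := by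
    intro w
    obtain ⟨z, hz, hfz⟩ := hsurja (addSubOne w b) (le_addSubOne w b)
    refine ⟨subAddOne z a, ?_⟩
    rw [hφval z hz, hfz, SNadd_sub]
  let φ : SN κ ≃o SN κ :=
    { toEquiv := Equiv.ofBijective φf ⟨hinj, hsurjf⟩
      map_rel_iff' := fun {u v} => hφiff u v }
  obtain ⟨g, hg⟩ := key_iso φ
  have hφapp : ∀ u, φ u = φf u := fun u => rfl
  have hkey : ∀ (z) (hz : z ∈ α.Dom), subAddOne (α.fn z hz) b = FgSN g (subAddOne z a) := by
    intro z hz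
    rw [← hφval z hz, ← hφapp, hg]
  have hmemiff : ∀ z w, w ∈ α z ↔ ∃ _ : a ≤ z, w = addSubOne (FgSN g (subAddOne z a)) b := by
    intro z w
    constructor
    · intro hw
      have hd : (α z).Dom := Part.dom_iff_mem.mpr ⟨w, hw⟩
      have hd' : z ∈ α.Dom := hd
      have haz : a ≤ z := by rw [ha] at hd'; exact hd'
      have he : α.fn z hd' = w := Part.get_eq_of_mem hw hd
      refine ⟨haz, ?_⟩
      rw [← he, ← hkey z hd', SNsub_add _ _ (hranb z hd')]
    · rintro ⟨haz, rfl⟩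
      have hd' : z ∈ α.Dom := hdom z haz
      have hval : addSubOne (FgSN g (subAddOne z a)) b = α.fn z hd' := by
        rw [← hkey z hd', SNsub_add _ _ (hranb z hd')]
      rw [hval]
      exact Part.get_mem hd'
  refine ⟨g, ?_, ?_⟩
  · apply PFun.ext
    intro z w
    rw [hmemiff z w, comp_mem_iff]
  · intro g1 h1
    apply Equiv.ext
    intro x
    have hz : a ≤ addSubOne (eSN x 1) a := le_addSubOne _ _
    have hsub : subAddOne (addSubOne (eSN x 1) a) a = eSN x 1 := SNadd_sub _ _
    have hw1 : addSubOne (FgSN g1 (eSN x 1)) b ∈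
        ((lamP b).comp ((FgP g1).comp (rhoP a))) (addSubOne (eSN x 1) a) :=
      (comp_mem_iff a b g1 _ _).mpr ⟨hz, by rw [hsub]⟩
    rw [← h1] at hw1
    obtain ⟨-, he⟩ := (hmemiff _ _).mp hw1
    rw [hsub] at he
    have heq : FgSN g1 (eSN x 1) = FgSN g (eSN x 1) := addSubOne_inj he
    have hval := congrArg (fun u => u.1 (g1 x)) heq
    rw [show (FgSN g1 (eSN x 1)).1 (g1 x) = (eSN x 1).1 (g1.symm (g1 x)) from rfl,
        show (FgSN g (eSN x 1)).1 (g1 x) = (eSN x 1).1 (g.symm (g1 x)) from rfl,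
        g1.symm_apply_apply, eSN_self] at hval
    by_contra hne
    have hxne : g.symm (g1 x) ≠ x := by
      intro h
      apply hne
      have h2 := congrArg g h
      rwa [g.apply_symm_apply] at h2
    rw [eSN_ne _ hxne] at hval
    omega
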